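/- Let θ > 0 satisfy θ = √(2e) · cosh(θ/4). Then the function u(t) = -2 · log( cosh((t - 1/2) · θ/2) / cosh(θ/4) ) satisfies u''(t) + exp(u(t) + 1) = 0 for all t ∈ [0,1], together with the boundary conditions u(0) = 0 and u(1) = 0. -/

import Mathlib

open Real Set

/-- If `θ > 0` satisfies `θ = √(2e) cosh(θ/4)`, then
`u(t) = -2 log( cosh((t-1/2) θ/2) / cosh(θ/4) )` solves the Bratu problem
`u'' + exp(u + 1) = 0` on `[0,1]` with `u 0 = 0` and `u 1 = 0`. -/
theorem bratu_solution (θ : ℝ) (hθ : 0 < θ)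
    (hroot : θ = Real.sqrt (2 * Real.exp 1) * Real.cosh (θ / 4)) :
    (∀ t ∈ Icc (0:ℝ) 1,
      deriv (deriv (fun s => -2 * Real.log (Real.cosh ((s - 1/2) * (θ/2)) / Real.cosh (θ/4)))) t
        + Real.exp ((-2 * Real.log (Real.cosh ((t - 1/2) * (θ/2)) / Real.cosh (θ/4))) + 1) = 0) ∧
    -2 * Real.log (Real.cosh (((0:ℝ) - 1/2) * (θ/2)) / Real.cosh (θ/4)) = 0 ∧
    -2 * Real.log (Real.cosh (((1:ℝ) - 1/2) * (θ/2)) / Real.cosh (θ/4)) = 0 := by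
  have hca : (0:ℝ) < Real.cosh (θ/4) := Real.cosh_pos _
  have hsq : θ ^ 2 = 2 * Real.exp 1 * Real.cosh (θ/4) ^ 2 := by
    conv_lhs => rw [hroot]
    rw [mul_pow, sq_sqrt (by positivity)]
  have hlin : ∀ t : ℝ, HasDerivAt (fun s : ℝ => (s - 1/2) * (θ/2)) (θ/2) t := by
    intro t
    have := ((hasDerivAt_id' t).sub_const (1/2 : ℝ)).mul_const (θ/2); rw [one_mul] at this; exact this
  have h1 : deriv (fun s => -2 * Real.log (Real.cosh ((s - 1/2) * (θ/2)) / Real.cosh (θ/4)))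
      = fun t => -θ * (Real.sinh ((t - 1/2) * (θ/2)) / Real.cosh ((t - 1/2) * (θ/2))) := by
    funext t
    set x := (t - 1/2) * (θ/2) with hx
    have hcx : (0:ℝ) < Real.cosh x := Real.cosh_pos _
    have h3 : HasDerivAt (fun s : ℝ => Real.cosh ((s - 1/2) * (θ/2)) / Real.cosh (θ/4))
        (Real.sinh x * (θ/2) / Real.cosh (θ/4)) t := ((hlin t).cosh).div_const _
    have h4 := (h3.log (by positivity)).const_mul (-2)
    rw [h4.deriv, ← hx]
    field_simp
  rw [h1]
  refine ⟨?_, ?_, ?_⟩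
  · intro t _
    set x := (t - 1/2) * (θ/2) with hx
    have hcx : (0:ℝ) < Real.cosh x := Real.cosh_pos _
    have hs : HasDerivAt (fun t : ℝ => Real.sinh ((t - 1/2) * (θ/2))) (Real.cosh x * (θ/2)) t :=
      (hlin t).sinh
    have hcd : HasDerivAt (fun t : ℝ => Real.cosh ((t - 1/2) * (θ/2))) (Real.sinh x * (θ/2)) t :=
      (hlin t).cosh
    have hd : HasDerivAt (fun t : ℝ =>
        -θ * (Real.sinh ((t - 1/2) * (θ/2)) / Real.cosh ((t - 1/2) * (θ/2))))
        (-θ * ((Real.cosh x * (θ/2) * Real.cosh x - Real.sinh x * (Real.sinh x * (θ/2)))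
          / Real.cosh x ^ 2)) t :=
      (hs.div hcd hcx.ne').const_mul (-θ)
    rw [hd.deriv]
    have hexp : Real.exp (-2 * Real.log (Real.cosh x / Real.cosh (θ/4)) + 1)
        = Real.exp 1 * (Real.cosh (θ/4) / Real.cosh x) ^ 2 := by
      rw [Real.exp_add]
      rw [show (-2 : ℝ) * Real.log (Real.cosh x / Real.cosh (θ/4))
          = 2 * Real.log (Real.cosh (θ/4) / Real.cosh x) by
        rw [Real.log_div hca.ne' hcx.ne', Real.log_div hcx.ne' hca.ne']; ring]
      rw [show (2:ℝ) * Real.log (Real.cosh (θ/4) / Real.cosh x)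
          = Real.log ((Real.cosh (θ/4) / Real.cosh x) ^ 2) by
        rw [Real.log_pow]; push_cast; ring]
      rw [Real.exp_log (by positivity)]
      ring
    rw [hexp]
    have hpyth : Real.cosh x ^ 2 - Real.sinh x ^ 2 = 1 := Real.cosh_sq_sub_sinh_sq x
    have h2e : 2 * Real.exp 1 * Real.cosh (θ/4) ^ 2 = θ ^ 2 := hsq.symm
    field_simp
    linear_combination (-(θ^2)) * hpyth + h2e
  · have e0 : ((0:ℝ) - 1/2) * (θ/2) = -(θ/4) := by ring
    rw [e0, Real.cosh_neg, div_self hca.ne', Real.log_one, mul_zero]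
  · have e1 : ((1:ℝ) - 1/2) * (θ/2) = θ/4 := by ring
    rw [e1, div_self hca.ne', Real.log_one, mul_zero]
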